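/- Let S be a 5-element set and let 𝒜 be a finite union-closed family of finite sets containing all five 4-element subsets of S. Then there exists an element x ∈ S such that 2·|{A ∈ 𝒜 : x ∈ A}| ≥ |𝒜|. (All five 4-subsets of a 5-set generate an FC(5)-family.) -/
import Mathlib


/-- A finite family of finite sets is union-closed if it is closed under pairwise unions. -/
def UnionClosed (𝒜 : Finset (Finset ℕ)) : Prop :=
  ∀ A ∈ 𝒜, ∀ B ∈ 𝒜, A ∪ B ∈ 𝒜

open Finset

lemma sigma_ext_aux : ∀ (p q : (_ : Finset ℕ) × ℕ), p.1 = q.1 → p.2 = q.2 → p = q := by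
  rintro ⟨a, b⟩ ⟨c, d⟩ h1 h2
  simp only at h1 h2
  cases h1; cases h2; rfl

lemma double_count (Bp : Finset ℕ) (C2 D3 : Finset (Finset ℕ))
    (hC2 : ∀ t ∈ C2, t.card = 2)
    (hD3 : ∀ v ∈ D3, v.card = 3)
    (hins : ∀ t ∈ C2, ∀ z ∈ Bp \ t, insert z t ∈ D3) :
    (Bp.card - 2) * C2.card ≤ 3 * D3.card := by
  classical
  set I : Finset ((_ : Finset ℕ) × ℕ) := C2.sigma (fun t => Bp \ t) with hIdef
  have hIcard : (Bp.card - 2) * C2.card ≤ I.card := by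
    rw [hIdef, Finset.card_sigma]
    calc (Bp.card - 2) * C2.card = ∑ _t ∈ C2, (Bp.card - 2) := by
          rw [Finset.sum_const, smul_eq_mul, mul_comm]
      _ ≤ ∑ t ∈ C2, (Bp \ t).card := by
          apply Finset.sum_le_sum
          intro t ht
          have h2 : t.card = 2 := hC2 t ht
          have := Finset.le_card_sdiff t Bp
          omega
  have hmemI : ∀ p ∈ I, p.1 ∈ C2 ∧ p.2 ∈ Bp ∧ p.2 ∉ p.1 := by
    intro p hp
    rw [hIdef, Finset.mem_sigma] at hp
    obtain ⟨hp1, hp2⟩ := hp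
    obtain ⟨hBp, hnot⟩ := Finset.mem_sdiff.mp hp2
    exact ⟨hp1, hBp, hnot⟩
  have himgsub : I.image (fun p => insert p.2 p.1) ⊆ D3 := by
    intro v hv
    obtain ⟨p, hp, rfl⟩ := Finset.mem_image.mp hv
    obtain ⟨h1, h2, h3⟩ := hmemI p hp
    exact hins p.1 h1 p.2 (Finset.mem_sdiff.mpr ⟨h2, h3⟩)
  have hfib : I.card ≤ 3 * (I.image (fun p => insert p.2 p.1)).card := by
    apply Finset.card_le_mul_card_image
    intro v hv
    have hv3 : v.card = 3 := hD3 v (himgsub hv)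
    have hle : (I.filter (fun p => insert p.2 p.1 = v)).card ≤ v.card := by
      apply Finset.card_le_card_of_injOn (fun p => p.2)
      · intro p hp
        obtain ⟨hpI, hpv⟩ := Finset.mem_filter.mp hp
        rw [← hpv]
        exact Finset.mem_insert_self _ _
      · intro p hp q hq hpq
        obtain ⟨hpI, hpv⟩ := Finset.mem_filter.mp (Finset.mem_coe.mp hp)
        obtain ⟨hqI, hqv⟩ := Finset.mem_filter.mp (Finset.mem_coe.mp hq)
        have hnp : p.2 ∉ p.1 := (hmemI p hpI).2.2
        have hnq : q.2 ∉ q.1 := (hmemI q hqI).2.2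
        have hpq' : p.2 = q.2 := hpq
        have h1 : p.1 = q.1 := by
          have e1 : p.1 = v.erase p.2 := by rw [← hpv, Finset.erase_insert hnp]
          have e2 : q.1 = v.erase q.2 := by rw [← hqv, Finset.erase_insert hnq]
          rw [e1, e2, hpq']
        exact sigma_ext_aux p q h1 hpq'
    omega
  have hlast : (I.image (fun p => insert p.2 p.1)).card ≤ D3.card :=
    Finset.card_le_card himgsub
  omega

set_option maxHeartbeats 2000000 in
lemma fiber_key (S : Finset ℕ) (hS : S.card = 5) (𝒢 : Finset (Finset ℕ))
    (hsub : ∀ t ∈ 𝒢, t ⊆ S) (hne : 𝒢.Nonempty)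
    (hu : ∀ a ∈ 𝒢, ∀ b ∈ 𝒢, a ∪ b ∈ 𝒢)
    (h4 : ∀ t ∈ 𝒢, ∀ T ⊆ S, T.card = 4 → t ∪ T ∈ 𝒢) :
    5 * 𝒢.card ≤ 2 * ∑ t ∈ 𝒢, t.card := by
  classical
  have h1lt : 1 < S.card := by omega
  obtain ⟨x, hx, y, hy, hxy⟩ := Finset.one_lt_card.mp h1lt
  obtain ⟨t0, ht0⟩ := hne
  -- S itself belongs to 𝒢
  have hSmem : S ∈ 𝒢 := by
    have hT1 : S.erase x ⊆ S := Finset.erase_subset _ _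
    have hT2 : S.erase y ⊆ S := Finset.erase_subset _ _
    have hc1 : (S.erase x).card = 4 := by rw [Finset.card_erase_of_mem hx, hS]
    have hc2 : (S.erase y).card = 4 := by rw [Finset.card_erase_of_mem hy, hS]
    have h1 : t0 ∪ S.erase x ∈ 𝒢 := h4 t0 ht0 _ hT1 hc1
    have h2 : (t0 ∪ S.erase x) ∪ S.erase y ∈ 𝒢 := h4 _ h1 _ hT2 hc2
    have heq : (t0 ∪ S.erase x) ∪ S.erase y = S := by
      apply Finset.Subset.antisymm
      · exact Finset.union_subset (Finset.union_subset (hsub t0 ht0) hT1) hT2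
      · intro z hz
        by_cases hzx : z = x
        · subst hzx
          exact Finset.mem_union.mpr (Or.inr (Finset.mem_erase.mpr ⟨hxy, hz⟩))
        · exact Finset.mem_union.mpr
            (Or.inl (Finset.mem_union.mpr (Or.inr (Finset.mem_erase.mpr ⟨hzx, hz⟩))))
    rwa [heq] at h2
  have hcle : ∀ t ∈ 𝒢, t.card ≤ 5 := fun t ht => hS ▸ Finset.card_le_card (hsub t ht)
  have hmaps : ∀ t ∈ 𝒢, t.card ∈ Finset.range 6 :=
    fun t ht => Finset.mem_range.mpr (by have := hcle t ht; omega)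
  have hA : 𝒢.card = ∑ j ∈ Finset.range 6, (𝒢.filter (fun t => t.card = j)).card :=
    Finset.card_eq_sum_card_fiberwise hmaps
  have hB : ∑ t ∈ 𝒢, t.card
      = ∑ j ∈ Finset.range 6, (𝒢.filter (fun t => t.card = j)).card * j := by
    rw [← Finset.sum_fiberwise_of_maps_to hmaps (fun t => t.card)]
    refine Finset.sum_congr rfl (fun j _ => ?_)
    rw [Finset.sum_congr rfl (fun t ht => (Finset.mem_filter.mp ht).2), Finset.sum_const,
      smul_eq_mul]
  simp only [Finset.sum_range_succ, Finset.sum_range_zero] at hA hB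
  -- the set of points whose singleton is in 𝒢
  set Bp : Finset ℕ := S.filter (fun z => ({z} : Finset ℕ) ∈ 𝒢) with hBpdef
  -- counts of sets of each size
  have hfsub : ∀ j : ℕ, 𝒢.filter (fun t => t.card = j) ⊆ S.powersetCard j := by
    intro j t ht
    rw [Finset.mem_filter] at ht
    exact Finset.mem_powersetCard.mpr ⟨hsub t ht.1, ht.2⟩
  have hpow : ∀ j : ℕ, (𝒢.filter (fun t => t.card = j)).card ≤ Nat.choose 5 j := by
    intro j
    calc (𝒢.filter (fun t => t.card = j)).card ≤ (S.powersetCard j).card :=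
          Finset.card_le_card (hfsub j)
      _ = Nat.choose 5 j := by rw [Finset.card_powersetCard, hS]
  have hn1le : (𝒢.filter (fun t => t.card = 1)).card ≤ 5 := (hpow 1).trans (by decide)
  have hn2le : (𝒢.filter (fun t => t.card = 2)).card ≤ 10 := (hpow 2).trans (by decide)
  have hn4le : (𝒢.filter (fun t => t.card = 4)).card ≤ 5 := (hpow 4).trans (by decide)
  have hk5 : (𝒢.filter (fun t => t.card = 5)).card = 1 := by
    have heq : 𝒢.filter (fun t => t.card = 5) = {S} := by
      apply Finset.Subset.antisymm
      · intro t ht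
        rw [Finset.mem_filter] at ht
        rw [Finset.mem_singleton]
        exact Finset.eq_of_subset_of_card_le (hsub t ht.1) (by omega)
      · intro t ht
        rw [Finset.mem_singleton] at ht
        subst ht
        exact Finset.mem_filter.mpr ⟨hSmem, hS⟩
    rw [heq, Finset.card_singleton]
  have hk0 : (𝒢.filter (fun t => t.card = 0)).card ≤ 1 := by
    have heq : 𝒢.filter (fun t => t.card = 0) ⊆ {∅} := by
      intro t ht
      rw [Finset.mem_filter] at ht
      rw [Finset.mem_singleton]
      exact Finset.card_eq_zero.mp ht.2
    calc _ ≤ ({∅} : Finset (Finset ℕ)).card := Finset.card_le_card heq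
      _ = 1 := Finset.card_singleton _
  -- n1 = |Bp|
  have hk1 : (𝒢.filter (fun t => t.card = 1)).card = Bp.card := by
    have himg : 𝒢.filter (fun t => t.card = 1) = Bp.image (fun z => ({z} : Finset ℕ)) := by
      ext t
      constructor
      · intro h
        obtain ⟨ht𝒢, hc⟩ := Finset.mem_filter.mp h
        obtain ⟨a, rfl⟩ := Finset.card_eq_one.mp hc
        refine Finset.mem_image.mpr ⟨a, Finset.mem_filter.mpr ⟨?_, ht𝒢⟩, rfl⟩
        exact Finset.singleton_subset_iff.mp (hsub _ ht𝒢)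
      · intro h
        obtain ⟨a, ha, rfl⟩ := Finset.mem_image.mp h
        obtain ⟨haS, ha𝒢⟩ := Finset.mem_filter.mp ha
        exact Finset.mem_filter.mpr ⟨ha𝒢, Finset.card_singleton a⟩
    rw [himg, Finset.card_image_of_injective _ Finset.singleton_injective]
  have hBple : Bp.card ≤ 5 := by
    calc Bp.card ≤ S.card := Finset.card_le_card (Finset.filter_subset _ _)
      _ = 5 := hS
  -- basic 4-set production
  have hE : ∀ t ∈ 𝒢, 5 - t.card ≤ (𝒢.filter (fun t => t.card = 4)).card := by
    intro t ht
    have hts := hsub t ht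
    have hcard : (S \ t).card = 5 - t.card := by rw [Finset.card_sdiff_of_subset hts, hS]
    have hle : (S \ t).card ≤ (𝒢.filter (fun t => t.card = 4)).card := by
      apply Finset.card_le_card_of_injOn (fun z => S.erase z)
      · intro z hz
        have hzS : z ∈ S := (Finset.mem_sdiff.mp hz).1
        have hzt : z ∉ t := (Finset.mem_sdiff.mp hz).2
        have hTsub : S.erase z ⊆ S := Finset.erase_subset _ _
        have hTc : (S.erase z).card = 4 := by rw [Finset.card_erase_of_mem hzS, hS]
        have hmem := h4 t ht _ hTsub hTc
        have hunion : t ∪ S.erase z = S.erase z :=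
          Finset.union_eq_right.mpr (Finset.subset_erase.mpr ⟨hts, hzt⟩)
        rw [hunion] at hmem
        exact Finset.mem_filter.mpr ⟨hmem, hTc⟩
      · intro z hz w hw hzw
        exact Finset.erase_injOn S
          (Finset.mem_coe.mpr ((Finset.mem_sdiff.mp (Finset.mem_coe.mp hz)).1))
          (Finset.mem_coe.mpr ((Finset.mem_sdiff.mp (Finset.mem_coe.mp hw)).1)) hzw
    omega
  have hG2 : 1 ≤ Bp.card → 4 ≤ (𝒢.filter (fun t => t.card = 4)).card := by
    intro h
    obtain ⟨z, hz⟩ := Finset.card_pos.mp h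
    obtain ⟨hzS, hz𝒢⟩ := Finset.mem_filter.mp hz
    have := hE {z} hz𝒢
    simpa using this
  have hG4 : 1 ≤ (𝒢.filter (fun t => t.card = 2)).card →
      3 ≤ (𝒢.filter (fun t => t.card = 4)).card := by
    intro h
    obtain ⟨t, ht⟩ := Finset.card_pos.mp h
    obtain ⟨ht𝒢, htc⟩ := Finset.mem_filter.mp ht
    have := hE t ht𝒢
    omega
  have hG5 : ∅ ∈ 𝒢 → 5 ≤ (𝒢.filter (fun t => t.card = 4)).card := by
    intro h
    simpa using hE ∅ h
  have hG6 : ∅ ∉ 𝒢 → (𝒢.filter (fun t => t.card = 0)).card = 0 := by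
    intro h
    rw [Finset.card_eq_zero]
    rw [Finset.filter_eq_empty_iff]
    intro t ht hc
    exact h (by rwa [Finset.card_eq_zero.mp hc] at ht)
  have hG3 : 2 ≤ Bp.card → 5 ≤ (𝒢.filter (fun t => t.card = 4)).card := by
    intro h
    obtain ⟨u, hu', v, hv', huv⟩ := Finset.one_lt_card.mp h
    obtain ⟨huS, hu𝒢⟩ := Finset.mem_filter.mp hu'
    obtain ⟨hvS, hv𝒢⟩ := Finset.mem_filter.mp hv'
    have hsuff : S.powersetCard 4 ⊆ 𝒢.filter (fun t => t.card = 4) := by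
      intro T hT
      obtain ⟨hTS, hT4⟩ := Finset.mem_powersetCard.mp hT
      have hmem : u ∈ T ∨ v ∈ T := by
        by_contra hcon
        push_neg at hcon
        have hu2 : u ∈ S \ T := Finset.mem_sdiff.mpr ⟨huS, hcon.1⟩
        have hv2 : v ∈ S \ T := Finset.mem_sdiff.mpr ⟨hvS, hcon.2⟩
        have hc1 : (S \ T).card = 1 := by rw [Finset.card_sdiff_of_subset hTS, hS, hT4]
        exact huv (Finset.card_le_one.mp (le_of_eq hc1) u hu2 v hv2)
      rcases hmem with hm | hm
      · have hmem2 := h4 {u} hu𝒢 T hTS hT4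
        rw [Finset.union_eq_right.mpr (Finset.singleton_subset_iff.mpr hm)] at hmem2
        exact Finset.mem_filter.mpr ⟨hmem2, hT4⟩
      · have hmem2 := h4 {v} hv𝒢 T hTS hT4
        rw [Finset.union_eq_right.mpr (Finset.singleton_subset_iff.mpr hm)] at hmem2
        exact Finset.mem_filter.mpr ⟨hmem2, hT4⟩
    have hcard5 : (S.powersetCard 4).card = 5 := by
      rw [Finset.card_powersetCard, hS]; decide
    calc (5:ℕ) = (S.powersetCard 4).card := hcard5.symm
      _ ≤ _ := Finset.card_le_card hsuff
  have hG7 : (𝒢.filter (fun t => t.card = 2)).card = 10 →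
      1 ≤ (𝒢.filter (fun t => t.card = 3)).card := by
    intro h
    have hCeq : 𝒢.filter (fun t => t.card = 2) = S.powersetCard 2 := by
      apply Finset.eq_of_subset_of_card_le (hfsub 2)
      rw [Finset.card_powersetCard, hS, h]; decide
    obtain ⟨z, hz⟩ : ((S.erase x).erase y).Nonempty := by
      apply Finset.card_pos.mp
      have hyex : y ∈ S.erase x := Finset.mem_erase.mpr ⟨Ne.symm hxy, hy⟩
      rw [Finset.card_erase_of_mem hyex, Finset.card_erase_of_mem hx, hS]
      norm_num
    obtain ⟨hzy, hz2⟩ := Finset.mem_erase.mp hz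
    obtain ⟨hzx, hzS⟩ := Finset.mem_erase.mp hz2
    have hxz : x ≠ z := fun h' => hzx h'.symm
    have hyz : y ≠ z := fun h' => hzy h'.symm
    have hxyG : ({x, y} : Finset ℕ) ∈ 𝒢 := by
      have hmem : ({x, y} : Finset ℕ) ∈ S.powersetCard 2 := by
        refine Finset.mem_powersetCard.mpr ⟨?_, ?_⟩
        · intro a ha
          rcases Finset.mem_insert.mp ha with h' | h'
          · exact h' ▸ hx
          · exact (Finset.mem_singleton.mp h') ▸ hy
        · rw [Finset.card_insert_of_notMem (by simpa using hxy), Finset.card_singleton]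
      rw [← hCeq] at hmem
      exact (Finset.mem_filter.mp hmem).1
    have hyzG : ({y, z} : Finset ℕ) ∈ 𝒢 := by
      have hmem : ({y, z} : Finset ℕ) ∈ S.powersetCard 2 := by
        refine Finset.mem_powersetCard.mpr ⟨?_, ?_⟩
        · intro a ha
          rcases Finset.mem_insert.mp ha with h' | h'
          · exact h' ▸ hy
          · exact (Finset.mem_singleton.mp h') ▸ hzS
        · rw [Finset.card_insert_of_notMem (by simpa using hyz), Finset.card_singleton]
      rw [← hCeq] at hmem
      exact (Finset.mem_filter.mp hmem).1
    have hun𝒢 := hu _ hxyG _ hyzG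
    have hun : ({x, y} ∪ {y, z} : Finset ℕ) = {x, y, z} := by
      ext a
      simp only [Finset.mem_union, Finset.mem_insert, Finset.mem_singleton]
      tauto
    have hc3 : ({x, y, z} : Finset ℕ).card = 3 := by
      rw [Finset.card_insert_of_notMem (by simp [hxy, hxz]),
        Finset.card_insert_of_notMem (by simp [hyz]),
        Finset.card_singleton]
    apply Finset.card_pos.mpr
    exact ⟨{x, y, z}, Finset.mem_filter.mpr ⟨hun ▸ hun𝒢, hc3⟩⟩
  -- the double-counting bound: (|Bp| - 2) * n2 ≤ 3 * n3
  have hD2 : (Bp.card - 2) * (𝒢.filter (fun t => t.card = 2)).card ≤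
      3 * (𝒢.filter (fun t => t.card = 3)).card := by
    apply double_count
    · intro t ht; exact (Finset.mem_filter.mp ht).2
    · intro v hv; exact (Finset.mem_filter.mp hv).2
    · intro t ht z hz
      obtain ⟨hzBp, hznt⟩ := Finset.mem_sdiff.mp hz
      have hz𝒢 : ({z} : Finset ℕ) ∈ 𝒢 := (Finset.mem_filter.mp hzBp).2
      have ht𝒢 := (Finset.mem_filter.mp ht).1
      have htc := (Finset.mem_filter.mp ht).2
      have hmem : {z} ∪ t ∈ 𝒢 := hu _ hz𝒢 _ ht𝒢
      rw [← Finset.insert_eq] at hmem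
      refine Finset.mem_filter.mpr ⟨hmem, ?_⟩
      rw [Finset.card_insert_of_notMem hznt, htc]
  -- linearize hD2 over the possible values of |Bp|
  have hD2' : Bp.card ≤ 2 ∨
      (Bp.card = 3 ∧ (𝒢.filter (fun t => t.card = 2)).card ≤ 3 * (𝒢.filter (fun t => t.card = 3)).card) ∨
      (Bp.card = 4 ∧ 2 * (𝒢.filter (fun t => t.card = 2)).card ≤ 3 * (𝒢.filter (fun t => t.card = 3)).card) ∨
      (Bp.card = 5 ∧ 3 * (𝒢.filter (fun t => t.card = 2)).card ≤ 3 * (𝒢.filter (fun t => t.card = 3)).card) := by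
    rcases (by omega : Bp.card ≤ 2 ∨ Bp.card = 3 ∨ Bp.card = 4 ∨ Bp.card = 5) with h | h | h | h
    · exact Or.inl h
    · exact Or.inr (Or.inl ⟨h, by rw [h] at hD2; omega⟩)
    · exact Or.inr (Or.inr (Or.inl ⟨h, by rw [h] at hD2; omega⟩))
    · exact Or.inr (Or.inr (Or.inr ⟨h, by rw [h] at hD2; omega⟩))
  by_cases h0 : ∅ ∈ 𝒢
  · have h5 := hG5 h0
    omega
  · have h00 := hG6 h0
    omega

set_option maxHeartbeats 1000000 in
/-- All five 4-subsets of a 5-set generate an FC(5)-family. -/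
theorem fc_all_foursets_of_fiveset
    (S : Finset ℕ) (hS : S.card = 5)
    (𝒜 : Finset (Finset ℕ)) (hUC : UnionClosed 𝒜)
    (h4 : ∀ T ⊆ S, T.card = 4 → T ∈ 𝒜) :
    ∃ x ∈ S, 2 * (𝒜.filter (fun A => x ∈ A)).card ≥ 𝒜.card := by
  classical
  have hkey : 5 * 𝒜.card ≤ 2 * ∑ A ∈ 𝒜, (A ∩ S).card := by
    have hmaps : ∀ A ∈ 𝒜, A \ S ∈ 𝒜.image (fun A => A \ S) :=
      fun A hA => Finset.mem_image_of_mem _ hA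
    have hcard : 𝒜.card
        = ∑ D ∈ 𝒜.image (fun A => A \ S), (𝒜.filter (fun A => A \ S = D)).card :=
      Finset.card_eq_sum_card_fiberwise hmaps
    have hsum : ∑ A ∈ 𝒜, (A ∩ S).card
        = ∑ D ∈ 𝒜.image (fun A => A \ S),
            ∑ A ∈ 𝒜.filter (fun A => A \ S = D), (A ∩ S).card :=
      (Finset.sum_fiberwise_of_maps_to hmaps _).symm
    rw [hcard, hsum, Finset.mul_sum, Finset.mul_sum]
    apply Finset.sum_le_sum
    intro D hD
    have hinj : ∀ A ∈ 𝒜.filter (fun A => A \ S = D), ∀ B ∈ 𝒜.filter (fun A => A \ S = D),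
        A ∩ S = B ∩ S → A = B := by
      intro A hA B hB hAB
      have hA' : A \ S = D := (Finset.mem_filter.mp hA).2
      have hB' : B \ S = D := (Finset.mem_filter.mp hB).2
      calc A = A \ S ∪ A ∩ S := (Finset.sdiff_union_inter A S).symm
        _ = B \ S ∪ B ∩ S := by rw [hA', hB', hAB]
        _ = B := Finset.sdiff_union_inter B S
    have hcardF : (𝒜.filter (fun A => A \ S = D)).card
        = ((𝒜.filter (fun A => A \ S = D)).image (fun A => A ∩ S)).card :=
      (Finset.card_image_of_injOn fun A hA B hB => hinj A hA B hB).symm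
    have hsumF : ∑ A ∈ 𝒜.filter (fun A => A \ S = D), (A ∩ S).card
        = ∑ t ∈ (𝒜.filter (fun A => A \ S = D)).image (fun A => A ∩ S), t.card :=
      (Finset.sum_image hinj).symm
    rw [hcardF, hsumF]
    apply fiber_key S hS
    · intro t ht
      obtain ⟨A, hA, rfl⟩ := Finset.mem_image.mp ht
      exact Finset.inter_subset_right
    · obtain ⟨A, hA, hAD⟩ := Finset.mem_image.mp hD
      exact ⟨A ∩ S, Finset.mem_image_of_mem _ (Finset.mem_filter.mpr ⟨hA, hAD⟩)⟩
    · intro a ha b hb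
      obtain ⟨A, hA, rfl⟩ := Finset.mem_image.mp ha
      obtain ⟨B, hB, rfl⟩ := Finset.mem_image.mp hb
      have hA𝒜 := (Finset.mem_filter.mp hA).1
      have hB𝒜 := (Finset.mem_filter.mp hB).1
      have hmem : A ∪ B ∈ 𝒜 := hUC A hA𝒜 B hB𝒜
      have hD' : (A ∪ B) \ S = D := by
        rw [Finset.union_sdiff_distrib, (Finset.mem_filter.mp hA).2,
          (Finset.mem_filter.mp hB).2, Finset.union_self]
      have : (A ∪ B) ∩ S = A ∩ S ∪ B ∩ S := Finset.union_inter_distrib_right A B S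
      rw [← this]
      exact Finset.mem_image_of_mem _ (Finset.mem_filter.mpr ⟨hmem, hD'⟩)
    · intro t ht T hTS hT4
      obtain ⟨A, hA, rfl⟩ := Finset.mem_image.mp ht
      have hA𝒜 := (Finset.mem_filter.mp hA).1
      have hT𝒜 : T ∈ 𝒜 := h4 T hTS hT4
      have hmem : A ∪ T ∈ 𝒜 := hUC A hA𝒜 T hT𝒜
      have hD' : (A ∪ T) \ S = D := by
        rw [Finset.union_sdiff_distrib, (Finset.mem_filter.mp hA).2,
          Finset.sdiff_eq_empty_iff_subset.mpr hTS, Finset.union_empty]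
      have hTr : (A ∪ T) ∩ S = A ∩ S ∪ T := by
        rw [Finset.union_inter_distrib_right, Finset.inter_eq_left.mpr hTS]
      rw [← hTr]
      exact Finset.mem_image_of_mem _ (Finset.mem_filter.mpr ⟨hmem, hD'⟩)
  by_contra hcon
  push_neg at hcon
  have hswap : ∑ x ∈ S, (𝒜.filter (fun A => x ∈ A)).card = ∑ A ∈ 𝒜, (A ∩ S).card := by
    calc ∑ x ∈ S, (𝒜.filter (fun A => x ∈ A)).card
        = ∑ x ∈ S, ∑ A ∈ 𝒜, if x ∈ A then 1 else 0 := by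
          refine Finset.sum_congr rfl fun x _ => ?_
          rw [Finset.card_filter]
      _ = ∑ A ∈ 𝒜, ∑ x ∈ S, if x ∈ A then 1 else 0 := Finset.sum_comm
      _ = ∑ A ∈ 𝒜, (A ∩ S).card := by
          refine Finset.sum_congr rfl fun A _ => ?_
          rw [← Finset.card_filter]
          congr 1
          ext z
          simp [Finset.mem_filter, Finset.mem_inter, and_comm]
  have hlt : ∀ x ∈ S, 2 * (𝒜.filter (fun A => x ∈ A)).card + 1 ≤ 𝒜.card := by
    intro x hx
    have := hcon x hx
    omega
  have hsum2 : ∑ x ∈ S, (2 * (𝒜.filter (fun A => x ∈ A)).card + 1) ≤ ∑ _x ∈ S, 𝒜.card :=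
    Finset.sum_le_sum hlt
  have hL : ∑ x ∈ S, (2 * (𝒜.filter (fun A => x ∈ A)).card + 1)
      = 2 * (∑ A ∈ 𝒜, (A ∩ S).card) + 5 := by
    rw [Finset.sum_add_distrib, ← Finset.mul_sum, hswap, Finset.sum_const, hS, smul_eq_mul,
      mul_one]
  have hR : ∑ _x ∈ S, 𝒜.card = 5 * 𝒜.card := by
    rw [Finset.sum_const, hS, smul_eq_mul]
  omega
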